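/- Let η : ℝ → ℝ be convex and differentiable, f : ℝ → ℝ^d continuously differentiable, q : ℝ → ℝ^d satisfy q'(u) = η'(u)f'(u), and define ψ(u) = η'(u)f(u) − q(u). For U_i, U_j ∈ ℝ and unit vector n, with λ ≥ |n·f'(ξ)| for all ξ between U_i and U_j and λ > 0, the low-order LLF flux H^{P0} = n·(f(U_i)+f(U_j))/2 − (λ/2)(U_j − U_i) satisfies the entropy stability condition (η'(U_j) − η'(U_i))·H^{P0} ≤ n·(ψ(U_j) − ψ(U_i)). -/

import Mathlib

open scoped RealInnerProductSpace

/-- Chen–Shu entropy stability of the low-order local Lax–Friedrichs flux for a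
scalar conservation law with entropy pair `(η, q)` and entropy potential
`ψ(u) = η'(u) f(u) − q(u)`. -/
theorem llf_entropy_stability (d : ℕ)
    (η : ℝ → ℝ) (hηc : ConvexOn ℝ Set.univ η) (hηd : Differentiable ℝ η)
    (f q : ℝ → EuclideanSpace ℝ (Fin d))
    (hf : ContDiff ℝ 1 f) (hq : Differentiable ℝ q)
    (hpair : ∀ u : ℝ, deriv q u = deriv η u • deriv f u)
    (n : EuclideanSpace ℝ (Fin d)) (hn : ‖n‖ = 1)
    (Ui Uj lam : ℝ) (hlam0 : 0 < lam)
    (hlam : ∀ ξ ∈ Set.uIcc Ui Uj, |(⟪deriv f ξ, n⟫ : ℝ)| ≤ lam) :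
    (deriv η Uj - deriv η Ui) *
        (⟪f Ui + f Uj, n⟫ / 2 - lam / 2 * (Uj - Ui)) ≤
      ⟪(deriv η Uj • f Uj - q Uj) - (deriv η Ui • f Ui - q Ui), n⟫ := by
  set a := deriv η Ui with ha
  set b := deriv η Uj with hb
  -- derivative facts
  have hfd : Differentiable ℝ f := hf.differentiable one_ne_zero
  have hgd : ∀ x : ℝ, HasDerivAt (fun u => (⟪f u, n⟫ : ℝ)) (⟪deriv f x, n⟫) x := by
    intro x
    have := ((hfd x).hasDerivAt.inner ℝ (hasDerivAt_const x n))
    simpa using this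
  have hQd : ∀ x : ℝ, HasDerivAt (fun u => (⟪q u, n⟫ : ℝ))
      (deriv η x * ⟪deriv f x, n⟫) x := by
    intro x
    have h := ((hq x).hasDerivAt.inner ℝ (hasDerivAt_const x n))
    simp only [inner_zero_right, zero_add, hpair x, real_inner_smul_left] at h
    exact h
  -- monotonicity of deriv η
  have hmono : MonotoneOn (deriv η) (Set.uIcc Ui Uj) := fun x _ y _ hxy =>
    (hηc.monotoneOn_deriv (fun z _ => hηd z)) (Set.mem_univ x) (Set.mem_univ y) hxy
  -- continuity of g'
  have hgc : Continuous fun s => (⟪deriv f s, n⟫ : ℝ) :=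
    Continuous.inner (hf.continuous_deriv le_rfl) continuous_const
  -- integrability
  have hint1 : IntervalIntegrable (fun s => (⟪deriv f s, n⟫ : ℝ)) MeasureTheory.volume Ui Uj :=
    hgc.intervalIntegrable _ _
  have hηint : IntervalIntegrable (deriv η) MeasureTheory.volume Ui Uj :=
    hmono.intervalIntegrable
  have hint2 : IntervalIntegrable (fun s => deriv η s * ⟪deriv f s, n⟫)
      MeasureTheory.volume Ui Uj :=
    hηint.mul_continuousOn hgc.continuousOn
  have hint3 : IntervalIntegrable (fun s => ((a + b) / 2 - deriv η s) * ⟪deriv f s, n⟫)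
      MeasureTheory.volume Ui Uj :=
    ((intervalIntegrable_const).sub hηint).mul_continuousOn hgc.continuousOn
  -- FTC
  have key1 : ∫ s in Ui..Uj, (⟪deriv f s, n⟫ : ℝ) = ⟪f Uj, n⟫ - ⟪f Ui, n⟫ :=
    intervalIntegral.integral_eq_sub_of_hasDerivAt (fun x _ => hgd x) hint1
  have key2 : ∫ s in Ui..Uj, deriv η s * ⟪deriv f s, n⟫ = ⟪q Uj, n⟫ - ⟪q Ui, n⟫ :=
    intervalIntegral.integral_eq_sub_of_hasDerivAt (fun x _ => hQd x) hint2
  -- splitting the integral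
  have split : ∫ s in Ui..Uj, ((a + b) / 2 - deriv η s) * ⟪deriv f s, n⟫
      = (a + b) / 2 * ((⟪f Uj, n⟫ : ℝ) - ⟪f Ui, n⟫) - ((⟪q Uj, n⟫ : ℝ) - ⟪q Ui, n⟫) := by
    have heq : (fun s => ((a + b) / 2 - deriv η s) * (⟪deriv f s, n⟫ : ℝ))
        = fun s => (a + b) / 2 * ⟪deriv f s, n⟫ - deriv η s * ⟪deriv f s, n⟫ := by
      funext s; ring
    rw [heq, intervalIntegral.integral_sub (hint1.const_mul _) hint2,
      intervalIntegral.integral_const_mul, key1, key2]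
  -- pointwise bound on deriv η
  have hab : ∀ s ∈ Set.uIcc Ui Uj, |(a + b) / 2 - deriv η s| ≤ |b - a| / 2 := by
    intro s hs
    rcases le_total Ui Uj with h | h
    · have hs' : s ∈ Set.Icc Ui Uj := by rwa [Set.uIcc_of_le h] at hs
      have h1 : a ≤ deriv η s := hmono Set.left_mem_uIcc hs hs'.1
      have h2 : deriv η s ≤ b := hmono hs Set.right_mem_uIcc hs'.2
      have hab' : a ≤ b := h1.trans h2
      have hba : |b - a| = b - a := abs_of_nonneg (by linarith)
      rw [hba, abs_le]; constructor <;> linarith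
    · have hs' : s ∈ Set.Icc Uj Ui := by rwa [Set.uIcc_of_ge h] at hs
      have h1 : b ≤ deriv η s := hmono Set.right_mem_uIcc hs hs'.1
      have h2 : deriv η s ≤ a := hmono hs Set.left_mem_uIcc hs'.2
      have hab' : b ≤ a := h1.trans h2
      have hba : |b - a| = a - b := by rw [abs_of_nonpos (by linarith : b - a ≤ 0)]; ring
      rw [hba, abs_le]; constructor <;> linarith
  -- bound on the integral
  have ibound : |∫ s in Ui..Uj, ((a + b) / 2 - deriv η s) * ⟪deriv f s, n⟫|
      ≤ |b - a| / 2 * lam * |Uj - Ui| := by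
    have := intervalIntegral.norm_integral_le_of_norm_le_const
      (C := |b - a| / 2 * lam)
      (f := fun s => ((a + b) / 2 - deriv η s) * ⟪deriv f s, n⟫) (a := Ui) (b := Uj) ?_
    · simpa [Real.norm_eq_abs] using this
    · intro x hx
      have hx' : x ∈ Set.uIcc Ui Uj := Set.uIoc_subset_uIcc hx
      rw [Real.norm_eq_abs, abs_mul]
      exact mul_le_mul (hab x hx') (hlam x hx') (abs_nonneg _)
        (by positivity)
  -- sign fact
  have hsign : |b - a| * |Uj - Ui| = (b - a) * (Uj - Ui) := by
    rcases le_total Ui Uj with h | h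
    · have hab' : a ≤ b := hmono Set.left_mem_uIcc Set.right_mem_uIcc h
      rw [abs_of_nonneg (by linarith), abs_of_nonneg (by linarith)]
    · have hab' : b ≤ a := hmono Set.right_mem_uIcc Set.left_mem_uIcc h
      rw [abs_of_nonpos (by linarith), abs_of_nonpos (by linarith)]; ring
  -- conclude
  have hlow := neg_abs_le (∫ s in Ui..Uj, ((a + b) / 2 - deriv η s) * ⟪deriv f s, n⟫)
  simp only [inner_sub_left, inner_add_left, real_inner_smul_left]
  nlinarith [split, ibound, hlow, hsign]
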